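/- arXiv:2010.05733 — 10 statements merged into one kernel-verified Lean document; each statement's English description precedes it below -/
import Mathlib

section
/- Let G be a graph and let (x,y) and (z,w) be two distinct comparable ordered pairs of vertices of G with (x,y) ~nt (z,w). Then {x,y} ∩ {z,w} = ∅. -/
open SimpleGraph

/-- The closed neighborhood `N_G[v]` of a vertex `v`. -/
def closedNbhd {V : Type*} (G : SimpleGraph V) (v : V) : Set V :=
  insert v (G.neighborSet v)

/-- An ordered pair `(x, y)` is comparable if `N_G[x] ⊆ N_G[y]`. -/
def ComparablePair {V : Type*} (G : SimpleGraph V) (x y : V) : Prop :=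
  closedNbhd G x ⊆ closedNbhd G y

/-- `(x, y) ~mt (z, w)`: matched twins. -/
def MatchedTwins {V : Type*} (G : SimpleGraph V) (x y z w : V) : Prop :=
  closedNbhd G x \ {y} = closedNbhd G z \ {w} ∧
  closedNbhd G y \ {x} = closedNbhd G w \ {z}

/-- `(x, y) ~nt (z, w)`: nested twins. -/
def NestedTwins {V : Type*} (G : SimpleGraph V) (x y z w : V) : Prop :=
  G.neighborSet x \ {y} = G.neighborSet z \ {w} ∧
  closedNbhd G y \ {x} = closedNbhd G w \ {z}

/-- The square `H²` of a graph: two distinct vertices are adjacent iff they are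
at distance at most two in `H`. -/
def squareGraph {V : Type*} (H : SimpleGraph V) : SimpleGraph V where
  Adj u v := u ≠ v ∧ (H.Adj u v ∨ ∃ w, H.Adj u w ∧ H.Adj w v)
  symm := by
    constructor
    rintro u v ⟨hne, h⟩
    refine ⟨hne.symm, ?_⟩
    rcases h with h | ⟨w, h1, h2⟩
    · exact Or.inl h.symm
    · exact Or.inr ⟨w, h2.symm, h1.symm⟩
  loopless := by constructor; rintro u ⟨hne, _⟩; exact hne rfl

/-- `F` is (isomorphic to) a disjoint union `pK₁ + qK₂`: it has maximum degree at most
one, `p` vertices of degree zero and `q` edges. -/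
def IsDisjUnionK1K2 {W : Type*} (F : SimpleGraph W) (p q : ℕ) : Prop :=
  (∀ u v w : W, F.Adj u v → F.Adj u w → v = w) ∧
  {v : W | ∀ w, ¬ F.Adj v w}.ncard = p ∧
  F.edgeSet.ncard = q

/-- `ab` is an `S`-matching edge of type 1 in `H`. -/
def Type1Edge {V : Type*} (H : SimpleGraph V) (S : Set V) (a b : V) : Prop :=
  a ∉ S ∧ b ∉ S ∧ H.Adj a b ∧
  H.neighborSet a ∩ S = ∅ ∧ (H.neighborSet b ∩ S).Nonempty

/-- `ab` is an `S`-matching edge of type 2 in `H`. -/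
def Type2Edge {V : Type*} (H : SimpleGraph V) (S : Set V) (a b : V) : Prop :=
  a ∉ S ∧ b ∉ S ∧ H.Adj a b ∧
  (H.neighborSet a ∩ S).Nonempty ∧ (H.neighborSet b ∩ S).Nonempty ∧
  H.neighborSet a ∩ H.neighborSet b ∩ S = ∅

/-- `ab` is an `S`-matching edge of type 3 in `H`. -/
def Type3Edge {V : Type*} (H : SimpleGraph V) (S : Set V) (a b : V) : Prop :=
  a ∉ S ∧ b ∉ S ∧ H.Adj a b ∧
  (H.neighborSet a ∩ H.neighborSet b ∩ S).Nonempty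

theorem stmt1 {V : Type*} [Fintype V] (G : SimpleGraph V) (x y z w : V)
    (hxy : ComparablePair G x y) (hzw : ComparablePair G z w)
    (hne : (x, y) ≠ (z, w)) (hnt : NestedTwins G x y z w) :
    ({x, y} : Set V) ∩ {z, w} = ∅ := by
  obtain ⟨h1, h2⟩ := hnt
  have hxmem : x ∈ closedNbhd G y := hxy (Set.mem_insert x _)
  have hzmem : z ∈ closedNbhd G w := hzw (Set.mem_insert z _)
  simp only [closedNbhd, Set.mem_insert_iff, SimpleGraph.mem_neighborSet] at hxmem hzmem
  have hxz : x ≠ z := by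
    rintro rfl
    have hyw : y ≠ w := fun h => hne (by rw [h])
    rcases hxmem with rfl | hadj
    · rcases hzmem with rfl | hadj'
      · exact hne rfl
      · have hw : w ∈ G.neighborSet x \ {x} :=
          ⟨hadj'.symm, fun h => G.loopless.irrefl x (Set.mem_singleton_iff.mp h ▸ hadj'.symm)⟩
        rw [h1] at hw
        exact hw.2 rfl
    · have hy : y ∈ G.neighborSet x \ {w} := ⟨hadj.symm, hyw⟩
      rw [← h1] at hy
      exact hy.2 rfl
  have hxw : x ≠ w := by
    rintro rfl
    have : x ∈ closedNbhd G x \ {z} := ⟨Set.mem_insert x _, hxz⟩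
    rw [← h2] at this
    exact this.2 rfl
  have hyz : y ≠ z := by
    rintro rfl
    have : y ∈ closedNbhd G y \ {x} := ⟨Set.mem_insert y _, fun h => hxz (Set.mem_singleton_iff.mp h).symm⟩
    rw [h2] at this
    exact this.2 rfl
  have hyw : y ≠ w := by
    rintro rfl
    have hx : x ∈ closedNbhd G y := hxy (Set.mem_insert x _)
    have : x ∈ closedNbhd G y \ {z} := ⟨hx, hxz⟩
    rw [← h2] at this
    exact this.2 rfl
  rw [Set.eq_empty_iff_forall_notMem]
  rintro v ⟨hv1, hv2⟩
  rcases hv1 with rfl | rfl <;> rcases hv2 with rfl | rfl <;> simp_all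
end

section
/- Let G be a graph and let (x,y) and (z,w) be two distinct ordered pairs of adjacent vertices of G with (x,y) ~mt (z,w). Then the graphs G − {x,y} and G − {z,w} are isomorphic. -/
open SimpleGraph

theorem stmt4 {V : Type*} [Fintype V] (G : SimpleGraph V) (x y z w : V)
    (hxy : G.Adj x y) (hzw : G.Adj z w) (hne : (x, y) ≠ (z, w))
    (hmt : MatchedTwins G x y z w) :
    Nonempty ((SimpleGraph.induce ({x, y}ᶜ : Set V) G) ≃g
      (SimpleGraph.induce ({z, w}ᶜ : Set V) G)) := by
  classical
  obtain ⟨h1, h2⟩ := hmt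
  have hxy' : x ≠ y := hxy.ne
  have hzw' : z ≠ w := hzw.ne
  have mem1 : ∀ u, ((u = x ∨ G.Adj x u) ∧ u ≠ y) ↔ ((u = z ∨ G.Adj z u) ∧ u ≠ w) := by
    intro u
    have := Set.ext_iff.mp h1 u
    simpa [closedNbhd, Set.mem_diff] using this
  have mem2 : ∀ u, ((u = y ∨ G.Adj y u) ∧ u ≠ x) ↔ ((u = w ∨ G.Adj w u) ∧ u ≠ z) := by
    intro u
    have := Set.ext_iff.mp h2 u
    simpa [closedNbhd, Set.mem_diff] using this
  have hxw : x ≠ w := ((mem1 x).mp ⟨Or.inl rfl, hxy'⟩).2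
  have hzy : z ≠ y := ((mem1 z).mpr ⟨Or.inl rfl, hzw'⟩).2
  have hyz : y ≠ z := ((mem2 y).mp ⟨Or.inl rfl, hxy'.symm⟩).2
  have hwx : w ≠ x := ((mem2 w).mpr ⟨Or.inl rfl, hzw'.symm⟩).2
  have ximpl : x = z → y = w := by
    intro h; subst h
    by_contra hyw
    exact ((mem1 y).mpr ⟨Or.inr hxy, hyw⟩).2 rfl
  have yimpl : y = w → x = z := by
    intro h; subst h
    by_contra hxz
    exact ((mem2 x).mpr ⟨Or.inr hxy.symm, hxz⟩).2 rfl
  have hxz : x ≠ z := fun h => hne (by rw [Prod.mk.injEq]; exact ⟨h, ximpl h⟩)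
  have hyw : y ≠ w := fun h => hne (by rw [Prod.mk.injEq]; exact ⟨yimpl h, h⟩)
  have adj1 : ∀ u, u ≠ x → u ≠ y → u ≠ z → u ≠ w → (G.Adj x u ↔ G.Adj z u) := by
    intro u h1 h2 h3 h4
    have := mem1 u
    tauto
  have adj2 : ∀ u, u ≠ x → u ≠ y → u ≠ z → u ≠ w → (G.Adj y u ↔ G.Adj w u) := by
    intro u h1 h2 h3 h4
    have := mem2 u
    tauto
  set σ : V ≃ V := (Equiv.swap x z).trans (Equiv.swap y w) with hσ
  have hσx : σ x = z := by
    simp only [hσ, Equiv.trans_apply, Equiv.swap_apply_left]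
    exact Equiv.swap_apply_of_ne_of_ne hzy hzw'
  have hσy : σ y = w := by
    simp only [hσ, Equiv.trans_apply]
    rw [Equiv.swap_apply_of_ne_of_ne hxy'.symm hyz, Equiv.swap_apply_left]
  have hσz : σ z = x := by
    simp only [hσ, Equiv.trans_apply, Equiv.swap_apply_right]
    exact Equiv.swap_apply_of_ne_of_ne hxy' hxw
  have hσw : σ w = y := by
    simp only [hσ, Equiv.trans_apply]
    rw [Equiv.swap_apply_of_ne_of_ne hwx hzw'.symm, Equiv.swap_apply_right]
  have hσu : ∀ u, u ≠ x → u ≠ y → u ≠ z → u ≠ w → σ u = u := by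
    intro u h1 h2 h3 h4
    simp only [hσ, Equiv.trans_apply]
    rw [Equiv.swap_apply_of_ne_of_ne h1 h3, Equiv.swap_apply_of_ne_of_ne h2 h4]
  have hmemf : ∀ v, v ∈ ({x, y}ᶜ : Set V) ↔ σ v ∈ ({z, w}ᶜ : Set V) := by
    intro v
    simp only [Set.mem_compl_iff, Set.mem_insert_iff, Set.mem_singleton_iff, not_or]
    rw [← hσx, ← hσy]
    simp [σ.apply_eq_iff_eq]
  have key : ∀ u v : V, u ≠ x → u ≠ y → v ≠ x → v ≠ y →
      (G.Adj (σ u) (σ v) ↔ G.Adj u v) := by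
    intro u v hux huy hvx hvy
    by_cases huz : u = z
    · subst huz
      by_cases hvw : v = w
      · subst hvw; rw [hσz, hσw]; exact ⟨fun _ => hzw, fun _ => hxy⟩
      · by_cases hvz : v = u
        · subst hvz; simp
        · rw [hσz, hσu v hvx hvy hvz hvw]; exact adj1 v hvx hvy hvz hvw
    · by_cases huw : u = w
      · subst huw
        by_cases hvz : v = z
        · subst hvz; rw [hσw, hσz]
          exact ⟨fun _ => hzw.symm, fun _ => hxy.symm⟩
        · by_cases hvw : v = u
          · subst hvw; simp
          · rw [hσw, hσu v hvx hvy hvz hvw]; exact adj2 v hvx hvy hvz hvw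
      · rw [hσu u hux huy huz huw]
        by_cases hvz : v = z
        · rw [hvz, hσz, G.adj_comm u x, G.adj_comm u z]
          exact adj1 u hux huy huz huw
        · by_cases hvw : v = w
          · rw [hvw, hσw, G.adj_comm u y, G.adj_comm u w]
            exact adj2 u hux huy huz huw
          · rw [hσu v hvx hvy hvz hvw]
  refine ⟨⟨Equiv.subtypeEquiv σ hmemf, ?_⟩⟩
  rintro ⟨a, ha⟩ ⟨b, hb⟩
  simp only [Set.mem_compl_iff, Set.mem_insert_iff, Set.mem_singleton_iff, not_or] at ha hb
  simpa [Equiv.subtypeEquiv] using key a b ha.1 ha.2 hb.1 hb.2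
end

section
/- Let G be a graph and let (x,y) and (z,w) be two distinct comparable ordered pairs of vertices of G with (x,y) ~nt (z,w). Then the graphs G − {x,y} and G − {z,w} are isomorphic. -/
open SimpleGraph

section NTAux

variable {V : Type*} (G : SimpleGraph V)

lemma cp_self {x y : V} (h : ComparablePair G x y) : x = y ∨ G.Adj x y := by
  have hx : x ∈ closedNbhd G x := Set.mem_insert x _
  have := h hx
  rcases this with h' | h'
  · exact Or.inl h'
  · exact Or.inr (G.adj_symm h')

lemma nt1 {x y z w : V} (h : NestedTwins G x y z w) (v : V) :
    (G.Adj x v ∧ v ≠ y) ↔ (G.Adj z v ∧ v ≠ w) := by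
  have := Set.ext_iff.mp h.1 v
  simpa [SimpleGraph.mem_neighborSet] using this

lemma nt2 {x y z w : V} (h : NestedTwins G x y z w) (v : V) :
    ((v = y ∨ G.Adj y v) ∧ v ≠ x) ↔ ((v = w ∨ G.Adj w v) ∧ v ≠ z) := by
  have := Set.ext_iff.mp h.2 v
  simpa [closedNbhd, SimpleGraph.mem_neighborSet] using this

lemma nt_eq_iff {x y z w : V}
    (hxy : ComparablePair G x y) (hzw : ComparablePair G z w)
    (hnt : NestedTwins G x y z w) : x = y ↔ z = w := by
  constructor
  · intro h
    subst h
    by_contra hzw'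
    have h2 := (nt2 G hnt w).mpr ⟨Or.inl rfl, fun hh => hzw' hh.symm⟩
    have hwx : w ≠ x := h2.2
    have hAdjxw : G.Adj x w := by
      rcases h2.1 with h'' | h''
      · exact absurd h'' hwx
      · exact h''
    have := (nt1 G hnt w).mp ⟨hAdjxw, hwx⟩
    exact this.2 rfl
  · intro h
    subst h
    by_contra hxy'
    have h2 := (nt2 G hnt y).mp ⟨Or.inl rfl, fun hh => hxy' hh.symm⟩
    have hyz : y ≠ z := h2.2
    have hAdjzy : G.Adj z y := by
      rcases h2.1 with h'' | h''
      · exact absurd h'' hyz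
      · exact h''
    have := (nt1 G hnt y).mpr ⟨hAdjzy, hyz⟩
    exact this.2 rfl

lemma ntA {x y z w : V}
    (hxy : ComparablePair G x y) (hzw : ComparablePair G z w)
    (hnt : NestedTwins G x y z w) (hzx : z ≠ x) (hzy : z ≠ y) : x ≠ w := by
  intro h
  by_cases hxy0 : x = y
  · have hzw0 : z = w := (nt_eq_iff G hxy hzw hnt).mp hxy0
    exact hzx (hzw0.trans h.symm)
  · have hzw0 : z ≠ w := fun hh => hxy0 ((nt_eq_iff G hxy hzw hnt).mpr hh)
    rcases cp_self G hzw with h' | hAdjzw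
    · exact hzw0 h'
    · -- x = w, so G.Adj z x
      have hAdjxz : G.Adj x z := by rw [h]; exact G.adj_symm hAdjzw
      have := (nt1 G hnt z).mp ⟨hAdjxz, hzy.symm ∘ Eq.symm⟩
      exact G.irrefl this.1
  
lemma ntB {x y z w : V}
    (hxy : ComparablePair G x y) (hzw : ComparablePair G z w)
    (hnt : NestedTwins G x y z w) (hwx : w ≠ x) (hwy : w ≠ y) (hwz : w ≠ z) :
    y ≠ z := by
  intro h
  by_cases hxy0 : x = y
  · exact hwz ((nt_eq_iff G hxy hzw hnt).mp hxy0).symm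
  · rcases cp_self G hxy with h' | hAdjxy
    · exact hxy0 h'
    · -- y = z, so G.Adj z x
      have hAdjzx : G.Adj z x := by rw [← h]; exact G.adj_symm hAdjxy
      have := (nt1 G hnt x).mpr ⟨hAdjzx, fun hh => hwx hh.symm⟩
      exact G.irrefl this.1

open Classical in
/-- The candidate isomorphism map: sends `z ↦ x`, `w ↦ y`, identity elsewhere. -/
noncomputable def ntMap (x y z w v : V) : V :=
  if v = z then x else if v = w then y else v

lemma ntMapMem {x y z w : V}
    (hxy : ComparablePair G x y) (hzw : ComparablePair G z w)
    (hnt : NestedTwins G x y z w) {v : V} (hvx : v ≠ x) (hvy : v ≠ y) :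
    ntMap x y z w v ≠ z ∧ ntMap x y z w v ≠ w := by
  unfold ntMap
  by_cases hvz : v = z
  · subst hvz
    rw [if_pos rfl]
    exact ⟨fun hh => hvx hh.symm, ntA G hxy hzw hnt hvx hvy⟩
  · rw [if_neg hvz]
    by_cases hvw : v = w
    · subst hvw
      rw [if_pos rfl]
      exact ⟨ntB G hxy hzw hnt hvx hvy hvz, fun hh => hvy hh.symm⟩
    · rw [if_neg hvw]
      exact ⟨hvz, hvw⟩

lemma ntMapInv {x y z w : V}
    (hxy : ComparablePair G x y) (hzw : ComparablePair G z w)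
    (hnt : NestedTwins G x y z w) {v : V} (hvx : v ≠ x) (hvy : v ≠ y) :
    ntMap z w x y (ntMap x y z w v) = v := by
  unfold ntMap
  by_cases hvz : v = z
  · subst hvz
    rw [if_pos rfl, if_pos rfl]
  · rw [if_neg hvz]
    by_cases hvw : v = w
    · subst hvw
      rw [if_pos rfl]
      have hyx : y ≠ x := by
        intro h
        exact hvz ((nt_eq_iff G hxy hzw hnt).mp h.symm).symm
      rw [if_neg hyx, if_pos rfl]
    · rw [if_neg hvw, if_neg hvx, if_neg hvy]

lemma ntMapAdj {x y z w : V}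
    (hxy : ComparablePair G x y) (hzw : ComparablePair G z w)
    (hnt : NestedTwins G x y z w) {a b : V}
    (hax : a ≠ x) (hay : a ≠ y) (hbx : b ≠ x) (hby : b ≠ y) :
    G.Adj (ntMap x y z w a) (ntMap x y z w b) ↔ G.Adj a b := by
  unfold ntMap
  by_cases haz : a = z
  · rw [if_pos haz]
    by_cases hbz : b = z
    · rw [if_pos hbz, haz, hbz]
      simp
    · rw [if_neg hbz]
      by_cases hbw : b = w
      · rw [if_pos hbw, haz, hbw]
        have hzw0 : z ≠ w := fun h => hbz (hbw.trans h.symm)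
        have hxy0 : x ≠ y := fun h => hzw0 ((nt_eq_iff G hxy hzw hnt).mp h)
        exact iff_of_true ((cp_self G hxy).resolve_left hxy0)
          ((cp_self G hzw).resolve_left hzw0)
      · rw [if_neg hbw, haz]
        constructor
        · intro h; exact ((nt1 G hnt b).mp ⟨h, hby⟩).1
        · intro h; exact ((nt1 G hnt b).mpr ⟨h, hbw⟩).1
  · rw [if_neg haz]
    by_cases haw : a = w
    · rw [if_pos haw]
      by_cases hbz : b = z
      · rw [if_pos hbz, haw, hbz]
        have hzw0 : z ≠ w := fun h => haz (haw.trans h.symm)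
        have hxy0 : x ≠ y := fun h => hzw0 ((nt_eq_iff G hxy hzw hnt).mp h)
        exact iff_of_true (G.adj_symm ((cp_self G hxy).resolve_left hxy0))
          (G.adj_symm ((cp_self G hzw).resolve_left hzw0))
      · rw [if_neg hbz]
        by_cases hbw : b = w
        · rw [if_pos hbw, haw, hbw]
          simp
        · rw [if_neg hbw, haw]
          constructor
          · intro h
            exact ((nt2 G hnt b).mp ⟨Or.inr h, hbx⟩).1.resolve_left hbw
          · intro h
            exact ((nt2 G hnt b).mpr ⟨Or.inr h, hbz⟩).1.resolve_left hby
    · rw [if_neg haw]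
      by_cases hbz : b = z
      · rw [if_pos hbz, hbz, G.adj_comm a x, G.adj_comm a z]
        constructor
        · intro h; exact ((nt1 G hnt a).mp ⟨h, hay⟩).1
        · intro h; exact ((nt1 G hnt a).mpr ⟨h, haw⟩).1
      · rw [if_neg hbz]
        by_cases hbw : b = w
        · rw [if_pos hbw, hbw, G.adj_comm a y, G.adj_comm a w]
          constructor
          · intro h
            exact ((nt2 G hnt a).mp ⟨Or.inr h, hax⟩).1.resolve_left haw
          · intro h
            exact ((nt2 G hnt a).mpr ⟨Or.inr h, haz⟩).1.resolve_left hay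
        · rw [if_neg hbw]

end NTAux

theorem stmt5 {V : Type*} [Fintype V] (G : SimpleGraph V) (x y z w : V)
    (hxy : ComparablePair G x y) (hzw : ComparablePair G z w)
    (hne : (x, y) ≠ (z, w)) (hnt : NestedTwins G x y z w) :
    Nonempty ((SimpleGraph.induce ({x, y}ᶜ : Set V) G) ≃g
      (SimpleGraph.induce ({z, w}ᶜ : Set V) G)) := by
  have hnt' : NestedTwins G z w x y := ⟨hnt.1.symm, hnt.2.symm⟩
  have memS : ∀ p : ({x, y}ᶜ : Set V), p.1 ≠ x ∧ p.1 ≠ y := by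
    rintro ⟨v, hv⟩
    simp only [Set.mem_compl_iff, Set.mem_insert_iff, Set.mem_singleton_iff, not_or] at hv
    exact hv
  have memT : ∀ p : ({z, w}ᶜ : Set V), p.1 ≠ z ∧ p.1 ≠ w := by
    rintro ⟨v, hv⟩
    simp only [Set.mem_compl_iff, Set.mem_insert_iff, Set.mem_singleton_iff, not_or] at hv
    exact hv
  refine ⟨⟨⟨fun p => ⟨ntMap x y z w p.1, ?_⟩, fun p => ⟨ntMap z w x y p.1, ?_⟩, ?_, ?_⟩, ?_⟩⟩
  · have h := ntMapMem G hxy hzw hnt (memS p).1 (memS p).2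
    simp only [Set.mem_compl_iff, Set.mem_insert_iff, Set.mem_singleton_iff, not_or]
    exact h
  · have h := ntMapMem G hzw hxy hnt' (memT p).1 (memT p).2
    simp only [Set.mem_compl_iff, Set.mem_insert_iff, Set.mem_singleton_iff, not_or]
    exact h
  · rintro p
    exact Subtype.ext (ntMapInv G hxy hzw hnt (memS p).1 (memS p).2)
  · rintro p
    exact Subtype.ext (ntMapInv G hzw hxy hnt' (memT p).1 (memT p).2)
  · intro a b
    simp only [SimpleGraph.comap_adj, Equiv.coe_fn_mk]
    exact ntMapAdj G hxy hzw hnt (memS a).1 (memS a).2 (memS b).1 (memS b).2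
end

section
/- Let H be a square root of a connected graph G with at least three vertices such that H − S is isomorphic to pK_1 + qK_2 for a set S ⊆ V(G). If a_1b_1 and a_2b_2 are two distinct S-matching edges of type 1 in H such that N_H(b_1) ∩ S = N_H(b_2) ∩ S ≠ ∅, then (a_1,b_1) and (a_2,b_2) are comparable pairs of G, i.e., N_G[a_1] ⊆ N_G[b_1] and N_G[a_2] ⊆ N_G[b_2]. -/
open SimpleGraph

lemma type1_comparable {V : Type*} (G H : SimpleGraph V) (S : Set V)
    (hsq : G = squareGraph H)
    (hmatch : ∀ u v w : ↥Sᶜ, (SimpleGraph.induce Sᶜ H).Adj u v →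
      (SimpleGraph.induce Sᶜ H).Adj u w → v = w)
    (a b : V) (h : Type1Edge H S a b) : ComparablePair G a b := by
  obtain ⟨haS, hbS, hab, hanb, _⟩ := h
  have huniq : ∀ x, H.Adj a x → x = b := by
    intro x hax
    by_cases hxS : x ∈ S
    · have hmem : x ∈ H.neighborSet a ∩ S := ⟨hax, hxS⟩
      rw [hanb] at hmem
      exact hmem.elim
    · have := hmatch ⟨a, haS⟩ ⟨x, hxS⟩ ⟨b, hbS⟩ hax hab
      exact congrArg Subtype.val this
  intro x hx
  subst hsq
  rcases hx with rfl | hx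
  · exact Or.inr ⟨hab.ne', Or.inl hab.symm⟩
  · rcases hx with ⟨hne, h | ⟨w, haw, hwx⟩⟩
    · exact Or.inl (huniq x h)
    · have hwb : w = b := huniq w haw
      rw [hwb] at hwx
      by_cases hxb : x = b
      · exact Or.inl hxb
      · exact Or.inr ⟨fun h => hxb h.symm, Or.inl hwx⟩

theorem stmt10 {V : Type*} [Fintype V] (G H : SimpleGraph V) (S : Set V) (p q : ℕ)
    (hconn : G.Connected) (hcard : 3 ≤ Fintype.card V)
    (hsq : G = squareGraph H)
    (hHS : IsDisjUnionK1K2 (SimpleGraph.induce Sᶜ H) p q)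
    (a₁ b₁ a₂ b₂ : V)
    (h₁ : Type1Edge H S a₁ b₁) (h₂ : Type1Edge H S a₂ b₂)
    (hne : s(a₁, b₁) ≠ s(a₂, b₂))
    (heq : H.neighborSet b₁ ∩ S = H.neighborSet b₂ ∩ S)
    (hnonempty : (H.neighborSet b₁ ∩ S).Nonempty) :
    ComparablePair G a₁ b₁ ∧ ComparablePair G a₂ b₂ :=
  ⟨type1_comparable G H S hsq hHS.1 a₁ b₁ h₁,
   type1_comparable G H S hsq hHS.1 a₂ b₂ h₂⟩
end

section
/- Let H be a square root of a connected graph G with at least three vertices such that H − S is isomorphic to pK_1 + qK_2 for a set S ⊆ V(G). If a_1b_1 and a_2b_2 are two distinct S-matching edges of type 1 in H such that N_H(b_1) ∩ S = N_H(b_2) ∩ S ≠ ∅, then it is not the case that (a_1,b_1) ~mt (a_2,b_2) in G. -/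
open SimpleGraph

theorem stmt12 {V : Type*} [Fintype V] (G H : SimpleGraph V) (S : Set V) (p q : ℕ)
    (hconn : G.Connected) (hcard : 3 ≤ Fintype.card V)
    (hsq : G = squareGraph H)
    (hHS : IsDisjUnionK1K2 (SimpleGraph.induce Sᶜ H) p q)
    (a₁ b₁ a₂ b₂ : V)
    (h₁ : Type1Edge H S a₁ b₁) (h₂ : Type1Edge H S a₂ b₂)
    (hne : s(a₁, b₁) ≠ s(a₂, b₂))
    (heq : H.neighborSet b₁ ∩ S = H.neighborSet b₂ ∩ S)
    (hnonempty : (H.neighborSet b₁ ∩ S).Nonempty) :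
    ¬ MatchedTwins G a₁ b₁ a₂ b₂ := by
  obtain ⟨hmatch, -, -⟩ := hHS
  obtain ⟨ha₁S, hb₁S, hab₁, haS₁, -⟩ := h₁
  obtain ⟨ha₂S, hb₂S, hab₂, haS₂, -⟩ := h₂
  -- the only neighbor of a₁ in H is b₁
  have hnb : ∀ w, H.Adj a₁ w → w = b₁ := by
    intro w hw
    have hwS : w ∉ S := fun hwS => Set.eq_empty_iff_forall_notMem.mp haS₁ w ⟨hw, hwS⟩
    have := hmatch ⟨a₁, ha₁S⟩ ⟨w, hwS⟩ ⟨b₁, hb₁S⟩ hw hab₁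
    exact congrArg Subtype.val this
  -- the only neighbor of b₁ outside S in H is a₁
  have hnb₁ : ∀ w, w ∉ S → H.Adj b₁ w → w = a₁ := by
    intro w hwS hw
    have := hmatch ⟨b₁, hb₁S⟩ ⟨w, hwS⟩ ⟨a₁, ha₁S⟩ hw hab₁.symm
    exact congrArg Subtype.val this
  have haa : a₁ ≠ a₂ := by
    intro h
    subst h
    exact hne (by rw [hnb b₂ hab₂])
  have hab : a₂ ≠ b₁ := by
    intro h
    subst h
    have : b₂ = a₁ := hnb₁ b₂ hb₂S hab₂
    subst this
    exact hne (Sym2.eq_swap)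
  rintro ⟨hmt1, -⟩
  have ha₂mem : a₂ ∈ closedNbhd G a₂ \ {b₂} := by
    refine ⟨Set.mem_insert _ _, ?_⟩
    simp only [Set.mem_singleton_iff]
    exact hab₂.ne
  rw [← hmt1] at ha₂mem
  obtain ⟨hmem, -⟩ := ha₂mem
  rcases hmem with h | h
  · exact haa h.symm
  · -- G.Adj a₁ a₂, impossible
    have hadj : G.Adj a₁ a₂ := h
    rw [hsq] at hadj
    obtain ⟨-, h'⟩ := hadj
    rcases h' with h' | ⟨w, hw1, hw2⟩
    · exact hab (hnb a₂ h')
    · have hwb : w = b₁ := hnb w hw1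
      subst hwb
      exact haa (hnb₁ a₂ ha₂S hw2).symm
end

section
/- Let H be a square root of a connected graph G with at least three vertices such that H − S is isomorphic to pK_1 + qK_2 for a set S ⊆ V(G). If a_1b_1 and a_2b_2 are two distinct S-matching edges of type 2 in H such that N_H(a_1) ∩ S = N_H(a_2) ∩ S and N_H(b_1) ∩ S = N_H(b_2) ∩ S, then (a_1,b_1) ~mt (a_2,b_2) in G. -/
open SimpleGraph

lemma type2_symm {V : Type*} (H : SimpleGraph V) (S : Set V) {a b : V}
    (h : Type2Edge H S a b) : Type2Edge H S b a := by
  obtain ⟨h1, h2, h3, h4, h5, h6⟩ := h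
  refine ⟨h2, h1, h3.symm, h5, h4, ?_⟩
  rwa [Set.inter_comm (H.neighborSet b)]

lemma key_nbhd {V : Type*} (G H : SimpleGraph V) (S : Set V)
    (hsq : G = squareGraph H)
    (hdeg : ∀ u v w : V, u ∉ S → v ∉ S → w ∉ S → H.Adj u v → H.Adj u w → v = w)
    (a b : V) (h : Type2Edge H S a b) :
    closedNbhd G a \ {b} =
      (H.neighborSet a ∩ S) ∪ (H.neighborSet b ∩ S) ∪
        ⋃ s ∈ H.neighborSet a ∩ S, H.neighborSet s := by
  subst hsq
  obtain ⟨haS, hbS, hab, ⟨sa, hsa⟩, ⟨sb, hsb⟩, hinter⟩ := h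
  have hneab : a ≠ b := hab.ne
  ext v
  simp only [closedNbhd, squareGraph, neighborSet, Set.mem_diff,
    Set.mem_insert_iff, Set.mem_setOf_eq, Set.mem_singleton_iff,
    Set.mem_union, Set.mem_iUnion, Set.mem_inter_iff]
  constructor
  · rintro ⟨hmem, hvb⟩
    rcases hmem with rfl | ⟨hne, hH | ⟨w, haw, hwv⟩⟩
    · exact Or.inr ⟨sa, ⟨hsa.1, hsa.2⟩, hsa.1.symm⟩
    · by_cases hvS : v ∈ S
      · exact Or.inl (Or.inl ⟨hH, hvS⟩)
      · exact absurd (hdeg a v b haS hvS hbS hH hab) hvb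
    · by_cases hwS : w ∈ S
      · exact Or.inr ⟨w, ⟨haw, hwS⟩, hwv⟩
      · have hwb : w = b := hdeg a w b haS hwS hbS haw hab
        rw [hwb] at hwv
        by_cases hvS : v ∈ S
        · exact Or.inl (Or.inr ⟨hwv, hvS⟩)
        · exact absurd (hdeg b v a hbS hvS haS hwv hab.symm).symm hne
  · rintro ((⟨hH, hvS⟩ | ⟨hH, hvS⟩) | ⟨s, ⟨has, hsS⟩, hsv⟩)
    · refine ⟨Or.inr ⟨fun hav => haS (hav ▸ hvS), Or.inl hH⟩, fun hvb => hbS (hvb ▸ hvS)⟩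
    · refine ⟨Or.inr ⟨fun hav => haS (hav ▸ hvS), Or.inr ⟨b, hab, hH⟩⟩,
        fun hvb => hbS (hvb ▸ hvS)⟩
    · have hvb : v ≠ b := by
        rintro rfl
        have : s ∈ H.neighborSet a ∩ H.neighborSet v ∩ S := ⟨⟨has, hsv.symm⟩, hsS⟩
        rw [hinter] at this
        exact this
      by_cases hva : v = a
      · exact ⟨Or.inl hva, hvb⟩
      · exact ⟨Or.inr ⟨fun h => hva h.symm, Or.inr ⟨s, has, hsv⟩⟩, hvb⟩

theorem stmt13 {V : Type*} [Fintype V] (G H : SimpleGraph V) (S : Set V) (p q : ℕ)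
    (hconn : G.Connected) (hcard : 3 ≤ Fintype.card V)
    (hsq : G = squareGraph H)
    (hHS : IsDisjUnionK1K2 (SimpleGraph.induce Sᶜ H) p q)
    (a₁ b₁ a₂ b₂ : V)
    (h₁ : Type2Edge H S a₁ b₁) (h₂ : Type2Edge H S a₂ b₂)
    (hne : s(a₁, b₁) ≠ s(a₂, b₂))
    (heqa : H.neighborSet a₁ ∩ S = H.neighborSet a₂ ∩ S)
    (heqb : H.neighborSet b₁ ∩ S = H.neighborSet b₂ ∩ S) :
    MatchedTwins G a₁ b₁ a₂ b₂ := by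
  have hdeg : ∀ u v w : V, u ∉ S → v ∉ S → w ∉ S → H.Adj u v → H.Adj u w → v = w := by
    intro u v w hu hv hw h1 h2
    have := hHS.1 ⟨u, hu⟩ ⟨v, hv⟩ ⟨w, hw⟩ h1 h2
    exact congrArg Subtype.val this
  constructor
  · rw [key_nbhd G H S hsq hdeg a₁ b₁ h₁, key_nbhd G H S hsq hdeg a₂ b₂ h₂,
      heqa, heqb]
  · rw [key_nbhd G H S hsq hdeg b₁ a₁ (type2_symm H S h₁),
      key_nbhd G H S hsq hdeg b₂ a₂ (type2_symm H S h₂), heqa, heqb]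
end

section
/- Let H be a square root of a connected graph G with at least three vertices such that H − S is isomorphic to pK_1 + qK_2 for a set S ⊆ V(G). If a_1b_1 and a_2b_2 are two distinct S-matching edges of type 2 in H such that N_H(a_1) ∩ S = N_H(a_2) ∩ S and N_H(b_1) ∩ S = N_H(b_2) ∩ S, then it is not the case that (a_1,b_1) ~nt (a_2,b_2) in G. -/
open SimpleGraph

theorem stmt14 {V : Type*} [Fintype V] (G H : SimpleGraph V) (S : Set V) (p q : ℕ)
    (hconn : G.Connected) (hcard : 3 ≤ Fintype.card V)
    (hsq : G = squareGraph H)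
    (hHS : IsDisjUnionK1K2 (SimpleGraph.induce Sᶜ H) p q)
    (a₁ b₁ a₂ b₂ : V)
    (h₁ : Type2Edge H S a₁ b₁) (h₂ : Type2Edge H S a₂ b₂)
    (hne : s(a₁, b₁) ≠ s(a₂, b₂))
    (heqa : H.neighborSet a₁ ∩ S = H.neighborSet a₂ ∩ S)
    (heqb : H.neighborSet b₁ ∩ S = H.neighborSet b₂ ∩ S) :
    ¬ NestedTwins G a₁ b₁ a₂ b₂ := by
  intro nt
  obtain ⟨ha₁S, hb₁S, hab₁, hNa₁, -, -⟩ := h₁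
  obtain ⟨ha₂S, hb₂S, hab₂, -, -, -⟩ := h₂
  have huniq : ∀ x y z : V, x ∉ S → y ∉ S → z ∉ S → H.Adj x y → H.Adj x z → y = z := by
    intro x y z hx hy hz hxy hxz
    have := hHS.1 ⟨x, hx⟩ ⟨y, hy⟩ ⟨z, hz⟩ hxy hxz
    exact congrArg Subtype.val this
  have hne12 : a₁ ≠ a₂ := by
    intro h
    subst h
    exact hne (by rw [huniq a₁ b₁ b₂ ha₁S hb₁S hb₂S hab₁ hab₂])
  have hne2b1 : a₂ ≠ b₁ := by
    intro h
    subst h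
    have : b₂ = a₁ := huniq a₂ b₂ a₁ ha₂S hb₂S ha₁S hab₂ hab₁.symm
    subst this
    exact hne (Sym2.eq_swap)
  obtain ⟨s, hs1, hsS⟩ := hNa₁
  have hs2 : s ∈ H.neighborSet a₂ ∩ S := heqa ▸ (Set.mem_inter hs1 hsS)
  have hGadj : G.Adj a₁ a₂ := by
    rw [hsq]
    exact ⟨hne12, Or.inr ⟨s, hs1, hs2.1.symm⟩⟩
  have hmem : a₂ ∈ G.neighborSet a₁ \ {b₁} := ⟨hGadj, hne2b1⟩
  rw [nt.1] at hmem
  exact G.irrefl hmem.1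
end

section
/- Let H be a square root of a connected graph G with at least three vertices such that H − S is isomorphic to pK_1 + qK_2 for a set S ⊆ V(G). If a_1b_1 and a_2b_2 are two distinct S-matching edges of type 3 in H such that N_H(a_1) ∩ S = N_H(a_2) ∩ S and N_H(b_1) ∩ S = N_H(b_2) ∩ S, then neither (a_1,b_1) ~mt (a_2,b_2) nor (a_1,b_1) ~nt (a_2,b_2) holds in G. -/
open SimpleGraph

theorem stmt15 {V : Type*} [Fintype V] (G H : SimpleGraph V) (S : Set V) (p q : ℕ)
    (hconn : G.Connected) (hcard : 3 ≤ Fintype.card V)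
    (hsq : G = squareGraph H)
    (hHS : IsDisjUnionK1K2 (SimpleGraph.induce Sᶜ H) p q)
    (a₁ b₁ a₂ b₂ : V)
    (h₁ : Type3Edge H S a₁ b₁) (h₂ : Type3Edge H S a₂ b₂)
    (hne : s(a₁, b₁) ≠ s(a₂, b₂))
    (heqa : H.neighborSet a₁ ∩ S = H.neighborSet a₂ ∩ S)
    (heqb : H.neighborSet b₁ ∩ S = H.neighborSet b₂ ∩ S) :
    ¬ MatchedTwins G a₁ b₁ a₂ b₂ ∧ ¬ NestedTwins G a₁ b₁ a₂ b₂ := by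

  obtain ⟨ha₁S, hb₁S, hab₁, s, ⟨hsa₁, hsb₁⟩, hsS⟩ := h₁
  obtain ⟨ha₂S, hb₂S, hab₂, -⟩ := h₂
  -- degree at most one outside S
  have hdeg : ∀ u v w : V, u ∉ S → v ∉ S → w ∉ S → H.Adj u v → H.Adj u w → v = w := by
    intro u v w hu hv hw huv huw
    have := hHS.1 ⟨u, hu⟩ ⟨v, hv⟩ ⟨w, hw⟩ huv huw
    exact congrArg Subtype.val this
  -- s is H-adjacent to a₂ and b₂
  have hsa₂ : s ∈ H.neighborSet a₂ := by
    have : s ∈ H.neighborSet a₁ ∩ S := ⟨hsa₁, hsS⟩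
    rw [heqa] at this; exact this.1
  have hsb₂ : s ∈ H.neighborSet b₂ := by
    have : s ∈ H.neighborSet b₁ ∩ S := ⟨hsb₁, hsS⟩
    rw [heqb] at this; exact this.1
  -- b₁ ≠ b₂
  have hb₁b₂ : b₁ ≠ b₂ := by
    intro h
    apply hne
    have : a₁ = a₂ := hdeg b₁ a₁ a₂ hb₁S ha₁S ha₂S hab₁.symm (h ▸ hab₂.symm)
    rw [this, h]
  -- b₁ ≠ a₂
  have hb₁a₂ : b₁ ≠ a₂ := by
    intro h
    apply hne
    have : a₁ = b₂ := hdeg b₁ a₁ b₂ hb₁S ha₁S hb₂S hab₁.symm (h ▸ hab₂)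
    rw [this, h, Sym2.eq_swap]
  -- b₁ is G-adjacent to a₂
  have hGadj : G.Adj a₂ b₁ := by
    rw [hsq]
    exact ⟨fun h => hb₁a₂ h.symm, Or.inr ⟨s, hsa₂, hsb₁.symm⟩⟩
  constructor
  · rintro ⟨h, -⟩
    have hmem : b₁ ∈ closedNbhd G a₂ \ {b₂} :=
      ⟨Set.mem_insert_iff.mpr (Or.inr hGadj.symm.symm), hb₁b₂⟩
    rw [← h] at hmem
    exact hmem.2 rfl
  · rintro ⟨h, -⟩
    have hmem : b₁ ∈ G.neighborSet a₂ \ {b₂} := ⟨hGadj, hb₁b₂⟩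
    rw [← h] at hmem
    exact hmem.2 rfl
end

section
/- Let H be a square root of a connected graph G with at least three vertices such that H − S is isomorphic to pK_1 + qK_2 for a set S ⊆ V(G). If a_1b_1 and a_2b_2 are two distinct S-matching edges of type 3 in H such that N_H(a_1) ∩ S = N_H(a_2) ∩ S and N_H(b_1) ∩ S = N_H(b_2) ∩ S, then a_1 and a_2 are true twins in G, and b_1 and b_2 are true twins in G. -/
open SimpleGraph

lemma key_subset {V : Type*} (H : SimpleGraph V) (S : Set V)
    (hdeg : ∀ x y z : V, x ∉ S → y ∉ S → z ∉ S → H.Adj x y → H.Adj x z → y = z)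
    (a₁ b₁ a₂ b₂ : V) (ha₁ : a₁ ∉ S) (hb₁ : b₁ ∉ S) (ha₂ : a₂ ∉ S) (hb₂ : b₂ ∉ S)
    (hab₁ : H.Adj a₁ b₁) (hab₂ : H.Adj a₂ b₂)
    (s : V) (hsa₁ : H.Adj a₁ s) (hsb₁ : H.Adj b₁ s)
    (hsa₂ : H.Adj a₂ s) (hsb₂ : H.Adj b₂ s)
    (heqa : H.neighborSet a₁ ∩ S = H.neighborSet a₂ ∩ S)
    (heqb : H.neighborSet b₁ ∩ S = H.neighborSet b₂ ∩ S)
    (hd1 : a₁ ≠ a₂) (hd2 : b₁ ≠ a₂) :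
    closedNbhd (squareGraph H) a₁ ⊆ closedNbhd (squareGraph H) a₂ := by
  intro v hv
  have hAa : ∀ w, w ∈ S → H.Adj a₁ w → H.Adj a₂ w := by
    intro w hw hadj
    have : w ∈ H.neighborSet a₂ ∩ S := heqa ▸ ⟨hadj, hw⟩
    exact this.1
  have hAb : ∀ w, w ∈ S → H.Adj b₁ w → H.Adj b₂ w := by
    intro w hw hadj
    have : w ∈ H.neighborSet b₂ ∩ S := heqb ▸ ⟨hadj, hw⟩
    exact this.1
  have ha₁mem : a₁ ∈ closedNbhd (squareGraph H) a₂ :=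
    Or.inr ⟨hd1.symm, Or.inr ⟨s, hsa₂, hsa₁.symm⟩⟩
  rcases hv with rfl | hv
  · exact ha₁mem
  · -- v ∈ neighborSet, i.e. (squareGraph H).Adj a₁ v
    obtain ⟨hne1, hcase⟩ := hv
    by_cases hva : v = a₂
    · rw [hva]; exact Set.mem_insert _ _
    rcases hcase with hadj | ⟨w, hw1, hw2⟩
    · -- H.Adj a₁ v
      by_cases hvS : v ∈ S
      · exact Or.inr ⟨fun h => hva h.symm, Or.inl (hAa v hvS hadj)⟩
      · have : b₁ = v := hdeg a₁ b₁ v ha₁ hb₁ hvS hab₁ hadj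
        subst this
        exact Or.inr ⟨Ne.symm hd2, Or.inr ⟨s, hsa₂, hsb₁.symm⟩⟩
    · -- path a₁ ~ w ~ v
      by_cases hwS : w ∈ S
      · exact Or.inr ⟨Ne.symm hva, Or.inr ⟨w, hAa w hwS hw1, hw2⟩⟩
      · have hwb : b₁ = w := hdeg a₁ b₁ w ha₁ hb₁ hwS hab₁ hw1
        subst hwb
        by_cases hvS : v ∈ S
        · exact Or.inr ⟨Ne.symm hva, Or.inr ⟨b₂, hab₂, hAb v hvS hw2⟩⟩
        · have : a₁ = v := hdeg b₁ a₁ v hb₁ ha₁ hvS hab₁.symm hw2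
          subst this
          exact ha₁mem

theorem stmt16 {V : Type*} [Fintype V] (G H : SimpleGraph V) (S : Set V) (p q : ℕ)
    (hconn : G.Connected) (hcard : 3 ≤ Fintype.card V)
    (hsq : G = squareGraph H)
    (hHS : IsDisjUnionK1K2 (SimpleGraph.induce Sᶜ H) p q)
    (a₁ b₁ a₂ b₂ : V)
    (h₁ : Type3Edge H S a₁ b₁) (h₂ : Type3Edge H S a₂ b₂)
    (hne : s(a₁, b₁) ≠ s(a₂, b₂))
    (heqa : H.neighborSet a₁ ∩ S = H.neighborSet a₂ ∩ S)
    (heqb : H.neighborSet b₁ ∩ S = H.neighborSet b₂ ∩ S) :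
    closedNbhd G a₁ = closedNbhd G a₂ ∧ closedNbhd G b₁ = closedNbhd G b₂ := by
  obtain ⟨ha₁, hb₁, hab₁, hw₁⟩ := h₁
  obtain ⟨ha₂, hb₂, hab₂, hw₂⟩ := h₂
  have hdeg : ∀ x y z : V, x ∉ S → y ∉ S → z ∉ S → H.Adj x y → H.Adj x z → y = z := by
    intro x y z hx hy hz hxy hxz
    have := hHS.1 ⟨x, hx⟩ ⟨y, hy⟩ ⟨z, hz⟩ hxy hxz
    exact congrArg Subtype.val this
  obtain ⟨s, ⟨hsa₁, hsb₁⟩, hsS⟩ := hw₁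
  have hsa₁ : H.Adj a₁ s := hsa₁
  have hsb₁ : H.Adj b₁ s := hsb₁
  have hsa₂ : H.Adj a₂ s := by have : s ∈ H.neighborSet a₂ ∩ S := heqa ▸ ⟨hsa₁, hsS⟩; exact this.1
  have hsb₂ : H.Adj b₂ s := by have : s ∈ H.neighborSet b₂ ∩ S := heqb ▸ ⟨hsb₁, hsS⟩; exact this.1
  have haa : a₁ ≠ a₂ := by
    rintro rfl
    exact hne (by rw [hdeg a₁ b₁ b₂ ha₁ hb₁ hb₂ hab₁ hab₂])
  have hbb : b₁ ≠ b₂ := by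
    rintro rfl
    exact hne (by rw [hdeg b₁ a₁ a₂ hb₁ ha₁ ha₂ hab₁.symm hab₂.symm])
  have hba : b₁ ≠ a₂ := by
    rintro rfl
    have : a₁ = b₂ := hdeg b₁ a₁ b₂ hb₁ ha₁ hb₂ hab₁.symm hab₂
    apply hne
    rw [this, Sym2.eq_swap]
  have hab : a₁ ≠ b₂ := by
    rintro rfl
    have : b₁ = a₂ := hdeg a₁ b₁ a₂ ha₁ hb₁ ha₂ hab₁ hab₂.symm
    apply hne
    rw [this, Sym2.eq_swap]
  subst hsq
  constructor
  · apply Set.Subset.antisymm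
    · exact key_subset H S hdeg a₁ b₁ a₂ b₂ ha₁ hb₁ ha₂ hb₂ hab₁ hab₂ s
        hsa₁ hsb₁ hsa₂ hsb₂ heqa heqb haa hba
    · exact key_subset H S hdeg a₂ b₂ a₁ b₁ ha₂ hb₂ ha₁ hb₁ hab₂ hab₁ s
        hsa₂ hsb₂ hsa₁ hsb₁ heqa.symm heqb.symm haa.symm hab.symm
  · apply Set.Subset.antisymm
    · exact key_subset H S hdeg b₁ a₁ b₂ a₂ hb₁ ha₁ hb₂ ha₂ hab₁.symm hab₂.symm s
        hsb₁ hsa₁ hsb₂ hsa₂ heqb heqa hbb hab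
    · exact key_subset H S hdeg b₂ a₂ b₁ a₁ hb₂ ha₂ hb₁ ha₁ hab₂.symm hab₁.symm s
        hsb₂ hsa₂ hsb₁ hsa₁ heqb.symm heqa.symm hbb.symm hba.symm
end

section
/- Let H be a square root of a connected graph G with at least three vertices such that H − S is isomorphic to pK_1 + qK_2 for a set S ⊆ V(G) of size k. Let Q be a set of ordered pairs of adjacent vertices of G that are pairwise equivalent under ~mt. If |Q| ≥ 2k + 2^{2k} + 1, then Q contains two pairs (a_1,b_1) and (a_2,b_2) such that a_1b_1 and a_2b_2 are S-matching edges of type 2 in H satisfying N_H(a_1) ∩ S = N_H(a_2) ∩ S and N_H(b_1) ∩ S = N_H(b_2) ∩ S. -/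
open SimpleGraph

lemma mem_closedNbhd {V : Type*} (G : SimpleGraph V) (x v : V) :
    x ∈ closedNbhd G v ↔ x = v ∨ G.Adj v x := by
  simp [closedNbhd]

lemma squareGraph_adj {V : Type*} (H : SimpleGraph V) (u v : V) :
    (squareGraph H).Adj u v ↔ u ≠ v ∧ (H.Adj u v ∨ ∃ w, H.Adj u w ∧ H.Adj w v) :=
  Iff.rfl

lemma key_type2 {V : Type*} (H : SimpleGraph V) (S : Set V)
    (hdeg : ∀ u v w : V, u ∉ S → v ∉ S → w ∉ S → H.Adj u v → H.Adj u w → v = w)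
    (a b a' b' : V)
    (hab : (squareGraph H).Adj a b) (hab' : (squareGraph H).Adj a' b')
    (hmt : MatchedTwins (squareGraph H) a b a' b')
    (hna : a ≠ a') (hnb : b ≠ b')
    (haS : a ∉ S) (hbS : b ∉ S) (haS' : a' ∉ S) (hbS' : b' ∉ S)
    (hA : H.neighborSet a ∩ S = H.neighborSet a' ∩ S)
    (hB : H.neighborSet b ∩ S = H.neighborSet b' ∩ S) :
    Type2Edge H S a b := by
  set G := squareGraph H with hG
  have hz_not : a' ∉ closedNbhd G b := by
    intro hmem
    have h1 : a' ∈ closedNbhd G b \ {a} := ⟨hmem, fun h => hna (Set.eq_of_mem_singleton h).symm⟩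
    rw [hmt.2] at h1
    exact h1.2 rfl
  have hw_not : b' ∉ closedNbhd G a := by
    intro hmem
    have h1 : b' ∈ closedNbhd G a \ {b} := ⟨hmem, fun h => hnb (Set.eq_of_mem_singleton h).symm⟩
    rw [hmt.1] at h1
    exact h1.2 rfl
  have ha'b_ne : a' ≠ b := fun h => hz_not ((mem_closedNbhd G a' b).mpr (Or.inl h))
  have hb'a_ne : b' ≠ a := fun h => hw_not ((mem_closedNbhd G b' a).mpr (Or.inl h))
  have hadj_aa' : G.Adj a a' := by
    have h1 : a' ∈ closedNbhd G a' \ {b'} :=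
      ⟨(mem_closedNbhd G a' a').mpr (Or.inl rfl), fun h => hab'.ne (Set.eq_of_mem_singleton h)⟩
    rw [← hmt.1] at h1
    rcases (mem_closedNbhd G a' a).mp h1.1 with h | h
    · exact absurd h hna.symm
    · exact h
  have hadj_bb' : G.Adj b b' := by
    have h1 : b' ∈ closedNbhd G b' \ {a'} :=
      ⟨(mem_closedNbhd G b' b').mpr (Or.inl rfl), fun h => hab'.ne' (Set.eq_of_mem_singleton h)⟩
    rw [← hmt.2] at h1
    rcases (mem_closedNbhd G b' b).mp h1.1 with h | h
    · exact absurd h hnb.symm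
    · exact h
  have step1 : H.Adj a b := by
    obtain ⟨hne, hc⟩ := (squareGraph_adj H a b).mp hab
    rcases hc with h | ⟨w, hw1, hw2⟩
    · exact h
    by_cases hwS : w ∈ S
    · exfalso
      have hwA : w ∈ H.neighborSet a' ∩ S := by rw [← hA]; exact ⟨hw1, hwS⟩
      have hGadj : G.Adj a' b := (squareGraph_adj H a' b).mpr ⟨ha'b_ne, Or.inr ⟨w, hwA.1, hw2⟩⟩
      exact hz_not ((mem_closedNbhd G a' b).mpr (Or.inr hGadj.symm))
    · exact absurd (hdeg w a b hwS haS hbS hw1.symm hw2) hne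
  have nonA : (H.neighborSet a ∩ S).Nonempty := by
    obtain ⟨hne, hc⟩ := (squareGraph_adj H a a').mp hadj_aa'
    rcases hc with h | ⟨w, hw1, hw2⟩
    · exact absurd (hdeg a b a' haS hbS haS' step1 h) ha'b_ne.symm
    by_cases hwS : w ∈ S
    · exact ⟨w, hw1, hwS⟩
    · exact absurd (hdeg w a a' hwS haS haS' hw1.symm hw2) hna
  have nonB : (H.neighborSet b ∩ S).Nonempty := by
    obtain ⟨hne, hc⟩ := (squareGraph_adj H b b').mp hadj_bb'
    rcases hc with h | ⟨w, hw1, hw2⟩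
    · exact absurd (hdeg b a b' hbS haS hbS' step1.symm h) hb'a_ne.symm
    by_cases hwS : w ∈ S
    · exact ⟨w, hw1, hwS⟩
    · exact absurd (hdeg w b b' hwS hbS hbS' hw1.symm hw2) hnb
  have emptyI : H.neighborSet a ∩ H.neighborSet b ∩ S = ∅ := by
    ext w
    simp only [Set.mem_inter_iff, Set.mem_empty_iff_false, iff_false, not_and]
    rintro ⟨hwa, hwb⟩ hwS
    have hwA : w ∈ H.neighborSet a' ∩ S := by rw [← hA]; exact ⟨hwa, hwS⟩
    have hGadj : G.Adj a' b := (squareGraph_adj H a' b).mpr ⟨ha'b_ne, Or.inr ⟨w, hwA.1, ((H.mem_neighborSet _ _).mp hwb).symm⟩⟩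
    exact hz_not ((mem_closedNbhd G a' b).mpr (Or.inr hGadj.symm))
  exact ⟨haS, hbS, step1, nonA, nonB, emptyI⟩

theorem stmt18 {V : Type*} [Fintype V] (G H : SimpleGraph V) (S : Set V) (p q k : ℕ)
    (hconn : G.Connected) (hcard : 3 ≤ Fintype.card V)
    (hsq : G = squareGraph H)
    (hHS : IsDisjUnionK1K2 (SimpleGraph.induce Sᶜ H) p q)
    (hk : S.ncard = k)
    (Q : Set (V × V))
    (hadj : ∀ e ∈ Q, G.Adj e.1 e.2)
    (hequiv : ∀ e₁ ∈ Q, ∀ e₂ ∈ Q, MatchedTwins G e₁.1 e₁.2 e₂.1 e₂.2)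
    (hsize : 2 * k + 2 ^ (2 * k) + 1 ≤ Q.ncard) :
    ∃ e₁ ∈ Q, ∃ e₂ ∈ Q, e₁ ≠ e₂ ∧
      Type2Edge H S e₁.1 e₁.2 ∧ Type2Edge H S e₂.1 e₂.2 ∧
      H.neighborSet e₁.1 ∩ S = H.neighborSet e₂.1 ∩ S ∧
      H.neighborSet e₁.2 ∩ S = H.neighborSet e₂.2 ∩ S := by
  classical
  subst hsq
  have hdeg : ∀ u v w : V, u ∉ S → v ∉ S → w ∉ S → H.Adj u v → H.Adj u w → v = w := by
    intro u v w hu hv hw h1 h2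
    have h3 := hHS.1 ⟨u, hu⟩ ⟨v, hv⟩ ⟨w, hw⟩ h1 h2
    exact congrArg Subtype.val h3
  have fstInj : ∀ e₁ ∈ Q, ∀ e₂ ∈ Q, e₁.1 = e₂.1 → e₁ = e₂ := by
    intro e₁ h₁ e₂ h₂ h
    by_contra hne
    have hmt := hequiv e₁ h₁ e₂ h₂
    have h2ne : e₂.2 ≠ e₁.2 := fun hh => hne (Prod.ext h hh.symm)
    have hmem : e₂.2 ∈ closedNbhd (squareGraph H) e₁.1 \ {e₁.2} := by
      refine ⟨?_, fun hc => h2ne (Set.eq_of_mem_singleton hc)⟩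
      rw [h]
      exact (mem_closedNbhd _ _ _).mpr (Or.inr (hadj e₂ h₂))
    rw [hmt.1] at hmem
    exact hmem.2 rfl
  have sndInj : ∀ e₁ ∈ Q, ∀ e₂ ∈ Q, e₁.2 = e₂.2 → e₁ = e₂ := by
    intro e₁ h₁ e₂ h₂ h
    by_contra hne
    have hmt := hequiv e₁ h₁ e₂ h₂
    have h1ne : e₂.1 ≠ e₁.1 := fun hh => hne (Prod.ext hh.symm h)
    have hmem : e₂.1 ∈ closedNbhd (squareGraph H) e₁.2 \ {e₁.1} := by
      refine ⟨?_, fun hc => h1ne (Set.eq_of_mem_singleton hc)⟩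
      rw [h]
      exact (mem_closedNbhd _ _ _).mpr (Or.inr (hadj e₂ h₂).symm)
    rw [hmt.2] at hmem
    exact hmem.2 rfl
  set T1 : Set (V × V) := {e ∈ Q | e.1 ∈ S} with hT1def
  set T2 : Set (V × V) := {e ∈ Q | e.2 ∈ S} with hT2def
  set Q' : Set (V × V) := {e ∈ Q | e.1 ∉ S ∧ e.2 ∉ S} with hQ'def
  have hT1 : T1.ncard ≤ k := by
    have h1 : (Prod.fst '' T1).ncard = T1.ncard :=
      Set.ncard_image_of_injOn (fun e he e' he' h => fstInj e he.1 e' he'.1 h)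
    have h2 : Prod.fst '' T1 ⊆ S := by rintro _ ⟨e, he, rfl⟩; exact he.2
    rw [← h1, ← hk]
    exact Set.ncard_le_ncard h2 (Set.toFinite S)
  have hT2 : T2.ncard ≤ k := by
    have h1 : (Prod.snd '' T2).ncard = T2.ncard :=
      Set.ncard_image_of_injOn (fun e he e' he' h => sndInj e he.1 e' he'.1 h)
    have h2 : Prod.snd '' T2 ⊆ S := by rintro _ ⟨e, he, rfl⟩; exact he.2
    rw [← h1, ← hk]
    exact Set.ncard_le_ncard h2 (Set.toFinite S)
  have hsub : Q ⊆ Q' ∪ (T1 ∪ T2) := by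
    intro e he
    by_cases h1 : e.1 ∈ S
    · exact Or.inr (Or.inl ⟨he, h1⟩)
    by_cases h2 : e.2 ∈ S
    · exact Or.inr (Or.inr ⟨he, h2⟩)
    · exact Or.inl ⟨he, h1, h2⟩
  have hQle : Q.ncard ≤ Q'.ncard + (T1.ncard + T2.ncard) := by
    calc Q.ncard ≤ (Q' ∪ (T1 ∪ T2)).ncard := Set.ncard_le_ncard hsub (Set.toFinite _)
      _ ≤ Q'.ncard + (T1 ∪ T2).ncard := Set.ncard_union_le _ _
      _ ≤ Q'.ncard + (T1.ncard + T2.ncard) :=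
          Nat.add_le_add_left (Set.ncard_union_le _ _) _
  have hQ'card : 2 ^ (2 * k) < Q'.ncard := by omega
  have hSfin : S.Finite := Set.toFinite S
  have hQ'fin : Q'.Finite := Set.toFinite Q'
  set f : V × V → Finset V × Finset V := fun e =>
    ((H.neighborSet e.1 ∩ S).toFinite.toFinset, (H.neighborSet e.2 ∩ S).toFinite.toFinset)
    with hfdef
  have hmaps : ∀ e ∈ hQ'fin.toFinset,
      f e ∈ hSfin.toFinset.powerset ×ˢ hSfin.toFinset.powerset := by
    intro e _
    simp only [hfdef, Finset.mem_product, Finset.mem_powerset,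
      Set.Finite.toFinset_subset_toFinset]
    exact ⟨Set.inter_subset_right, Set.inter_subset_right⟩
  have hcard2 : (hSfin.toFinset.powerset ×ˢ hSfin.toFinset.powerset).card
      < hQ'fin.toFinset.card := by
    rw [Finset.card_product, Finset.card_powerset, ← Set.ncard_eq_toFinset_card Q' hQ'fin,
      ← Set.ncard_eq_toFinset_card S hSfin, hk, ← pow_add]
    rw [two_mul] at hQ'card
    exact hQ'card
  obtain ⟨x, hx, y, hy, hxy, hfxy⟩ :=
    Finset.exists_ne_map_eq_of_card_lt_of_maps_to hcard2 hmaps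
  rw [Set.Finite.mem_toFinset] at hx hy
  obtain ⟨hxQ, hx1, hx2⟩ := hx
  obtain ⟨hyQ, hy1, hy2⟩ := hy
  have hA : H.neighborSet x.1 ∩ S = H.neighborSet y.1 ∩ S := by
    have h1 := congrArg Prod.fst hfxy
    simpa only [hfdef, Set.Finite.toFinset_inj] using h1
  have hB : H.neighborSet x.2 ∩ S = H.neighborSet y.2 ∩ S := by
    have h1 := congrArg Prod.snd hfxy
    simpa only [hfdef, Set.Finite.toFinset_inj] using h1
  have hna : x.1 ≠ y.1 := fun h => hxy (fstInj x hxQ y hyQ h)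
  have hnb : x.2 ≠ y.2 := fun h => hxy (sndInj x hxQ y hyQ h)
  refine ⟨x, hxQ, y, hyQ, hxy, ?_, ?_, hA, hB⟩
  · exact key_type2 H S hdeg x.1 x.2 y.1 y.2 (hadj x hxQ) (hadj y hyQ)
      (hequiv x hxQ y hyQ) hna hnb hx1 hx2 hy1 hy2 hA hB
  · exact key_type2 H S hdeg y.1 y.2 x.1 x.2 (hadj y hyQ) (hadj x hxQ)
      (hequiv y hyQ x hxQ) hna.symm hnb.symm hy1 hy2 hx1 hx2 hA.symm hB.symm
end
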